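/- Let ψ = v v† be a pure state on n qubits and P ∈ P_n. Then Σ_{Q ∈ P_n, PQ = QP} (p⋆p)_ψ(Q) = (1 + tr(Pψ)⁴)/2; that is, the probability under the Bell-difference (convolved Pauli) distribution that a sampled Pauli commutes with P equals (1 + tr(Pψ)⁴)/2. -/

import Mathlib

open Matrix
open scoped Classical

noncomputable section

/-- The four 2×2 Pauli matrices: `0 ↦ I`, `1 ↦ X`, `2 ↦ Y`, `3 ↦ Z`. -/
def pauli1 : Fin 4 → Matrix (Fin 2) (Fin 2) ℂ
  | 0 => !![1, 0; 0, 1]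
  | 1 => !![0, 1; 1, 0]
  | 2 => !![0, -Complex.I; Complex.I, 0]
  | 3 => !![1, 0; 0, -1]

/-- The `n`-qubit Pauli operator associated to the string `s : Fin n → Fin 4`. -/
def PauliOp (n : ℕ) (s : Fin n → Fin 4) :
    Matrix (Fin n → Fin 2) (Fin n → Fin 2) ℂ :=
  Matrix.of fun i j => ∏ a, pauli1 (s a) (i a) (j a)

/-- The Pauli distribution of a state `ψ`: `p_ψ(P) = tr(Pψ)² / 2^n`. -/
def pDist (n : ℕ) (ψ : Matrix (Fin n → Fin 2) (Fin n → Fin 2) ℂ)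
    (s : Fin n → Fin 4) : ℝ :=
  ((Matrix.trace (PauliOp n s * ψ)).re) ^ 2 / 2 ^ n

/-- The self-convolution of the Pauli distribution:
`(p⋆p)_ψ(P) = ∑_{Q ∈ 𝒫_n} p_ψ(Q) · |tr(QPψ)|² / 2^n`. -/
def pConv (n : ℕ) (ψ : Matrix (Fin n → Fin 2) (Fin n → Fin 2) ℂ)
    (s : Fin n → Fin 4) : ℝ :=
  ∑ s' : Fin n → Fin 4,
    pDist n ψ s' *
      Complex.normSq (Matrix.trace (PauliOp n s' * PauliOp n s * ψ)) / 2 ^ n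

variable {n : ℕ}

lemma PauliOp_mul_apply (s s' : Fin n → Fin 4) (i j : Fin n → Fin 2) :
    (PauliOp n s * PauliOp n s') i j
      = ∏ a, (pauli1 (s a) * pauli1 (s' a)) (i a) (j a) := by
  simp only [Matrix.mul_apply, PauliOp, Matrix.of_apply]
  have : ∀ k : Fin n → Fin 2,
      (∏ a, pauli1 (s a) (i a) (k a)) * ∏ a, pauli1 (s' a) (k a) (j a)
        = ∏ a, pauli1 (s a) (i a) (k a) * pauli1 (s' a) (k a) (j a) := by
    intro k; rw [Finset.prod_mul_distrib]
  simp only [this]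
  rw [← Fintype.prod_sum fun a x => pauli1 (s a) (i a) x * pauli1 (s' a) x (j a)]

lemma pauli1_sum_mul (a b e f : Fin 2) :
    ∑ c : Fin 4, pauli1 c a b * pauli1 c e f
      = if a = f ∧ b = e then 2 else 0 := by
  fin_cases a <;> fin_cases b <;> fin_cases e <;> fin_cases f <;>
    simp [Fin.sum_univ_four, pauli1, Complex.I_mul_I] <;> ring

lemma pauli_sum_mul (i j k l : Fin n → Fin 2) :
    ∑ s : Fin n → Fin 4, PauliOp n s i j * PauliOp n s k l
      = if i = l ∧ j = k then (2 : ℂ) ^ n else 0 := by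
  simp only [PauliOp, Matrix.of_apply]
  have h1 : ∀ s : Fin n → Fin 4,
      (∏ a, pauli1 (s a) (i a) (j a)) * ∏ a, pauli1 (s a) (k a) (l a)
        = ∏ a, pauli1 (s a) (i a) (j a) * pauli1 (s a) (k a) (l a) := fun s => by
    rw [Finset.prod_mul_distrib]
  simp only [h1]
  rw [← Fintype.prod_sum fun a c => pauli1 c (i a) (j a) * pauli1 c (k a) (l a)]
  simp only [pauli1_sum_mul]
  by_cases h : i = l ∧ j = k
  · rw [if_pos h]
    obtain ⟨h1, h2⟩ := h
    subst h1; subst h2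
    simp
  · rw [if_neg h]
    have : ∃ a, ¬(i a = l a ∧ j a = k a) := by
      by_contra hc
      push_neg at hc
      exact h ⟨funext fun a => (hc a).1, funext fun a => (hc a).2⟩
    obtain ⟨a, ha⟩ := this
    exact Finset.prod_eq_zero (Finset.mem_univ a) (if_neg ha)


lemma trace_mul_expand (A B : Matrix (Fin n → Fin 2) (Fin n → Fin 2) ℂ) :
    trace (A * B) = ∑ p : (Fin n → Fin 2) × (Fin n → Fin 2), A p.1 p.2 * B p.2 p.1 := by
  rw [Fintype.sum_prod_type]
  simp [Matrix.trace, Matrix.diag, Matrix.mul_apply]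

lemma moment (A B : Matrix (Fin n → Fin 2) (Fin n → Fin 2) ℂ) :
    ∑ s' : Fin n → Fin 4, trace (PauliOp n s' * A) * trace (PauliOp n s' * B)
      = (2 : ℂ) ^ n * trace (A * B) := by
  simp only [trace_mul_expand]
  calc ∑ s' : Fin n → Fin 4,
        (∑ p : (Fin n → Fin 2) × (Fin n → Fin 2), PauliOp n s' p.1 p.2 * A p.2 p.1) *
        (∑ q : (Fin n → Fin 2) × (Fin n → Fin 2), PauliOp n s' q.1 q.2 * B q.2 q.1)
      = ∑ p : (Fin n → Fin 2) × (Fin n → Fin 2),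
          ∑ q : (Fin n → Fin 2) × (Fin n → Fin 2),
          (∑ s' : Fin n → Fin 4, PauliOp n s' p.1 p.2 * PauliOp n s' q.1 q.2) *
            (A p.2 p.1 * B q.2 q.1) := by
        simp only [Finset.sum_mul_sum]
        rw [Finset.sum_comm]
        refine Finset.sum_congr rfl fun p _ => ?_
        rw [Finset.sum_comm]
        refine Finset.sum_congr rfl fun q _ => ?_
        rw [Finset.sum_mul]
        exact Finset.sum_congr rfl fun s' _ => by ring
    _ = (2:ℂ)^n * ∑ p : (Fin n → Fin 2) × (Fin n → Fin 2), A p.2 p.1 * B p.1 p.2 := by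
        simp only [pauli_sum_mul]
        rw [Finset.mul_sum]
        refine Finset.sum_congr rfl fun p _ => ?_
        rw [Finset.sum_eq_single ((p.2, p.1) : (Fin n → Fin 2) × (Fin n → Fin 2))]
        · simp
        · intro q _ hq
          rw [if_neg, zero_mul]
          rintro ⟨h1, h2⟩
          exact hq (Prod.ext h2.symm h1.symm)
        · intro h; exact absurd (Finset.mem_univ _) h
    _ = (2:ℂ)^n * ∑ p : (Fin n → Fin 2) × (Fin n → Fin 2), A p.1 p.2 * B p.2 p.1 := by
        rw [← Equiv.sum_comp (Equiv.prodComm _ _)]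
        simp [Equiv.prodComm]

def chi1 (c c' : Fin 4) : ℂ :=
  if pauli1 c * pauli1 c' = pauli1 c' * pauli1 c then 1 else -1

lemma pauli1_comm (c c' : Fin 4) :
    pauli1 c * pauli1 c' = chi1 c c' • (pauli1 c' * pauli1 c) := by
  by_cases h : pauli1 c * pauli1 c' = pauli1 c' * pauli1 c
  · rw [chi1, if_pos h, one_smul, h]
  · rw [chi1, if_neg h]
    fin_cases c <;> fin_cases c' <;>
      first
      | (exfalso; apply h; ext a b;
         fin_cases a <;> fin_cases b <;>
           simp [pauli1, Matrix.mul_apply, Fin.sum_univ_two] ; done)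
      | (ext a b;
         fin_cases a <;> fin_cases b <;>
           simp [pauli1, Matrix.mul_apply, Fin.sum_univ_two, Matrix.smul_apply])

def chi (n : ℕ) (s s' : Fin n → Fin 4) : ℂ := ∏ a, chi1 (s a) (s' a)

lemma chi1_cases (c c' : Fin 4) : chi1 c c' = 1 ∨ chi1 c c' = -1 := by
  rw [chi1]; split <;> simp

lemma chi_cases (s s' : Fin n → Fin 4) : chi n s s' = 1 ∨ chi n s s' = -1 := by
  rw [chi]
  induction (Finset.univ : Finset (Fin n)) using Finset.induction with
  | empty => simp
  | insert _ _ h ih =>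
    rw [Finset.prod_insert h]
    rcases chi1_cases (s _) (s' _) with h1 | h1 <;> rcases ih with h2 | h2 <;>
      rw [h1, h2] <;> norm_num

lemma pauli1_mul_self (c : Fin 4) : pauli1 c * pauli1 c = 1 := by
  fin_cases c <;>
    · ext a b
      fin_cases a <;> fin_cases b <;>
        simp [pauli1, Matrix.mul_apply, Fin.sum_univ_two, Matrix.one_apply,
          Complex.I_mul_I]

lemma PauliOp_mul_self (s : Fin n → Fin 4) : PauliOp n s * PauliOp n s = 1 := by
  ext i j
  rw [PauliOp_mul_apply]
  simp only [pauli1_mul_self]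
  by_cases h : i = j
  · subst h; simp [Matrix.one_apply]
  · have : ∃ a, i a ≠ j a := by
      by_contra hc; push_neg at hc; exact h (funext hc)
    obtain ⟨a, ha⟩ := this
    rw [Matrix.one_apply_ne h]
    exact Finset.prod_eq_zero (Finset.mem_univ a) (Matrix.one_apply_ne ha)

lemma PauliOp_commute (s s' : Fin n → Fin 4) :
    PauliOp n s * PauliOp n s' = chi n s s' • (PauliOp n s' * PauliOp n s) := by
  ext i j
  rw [PauliOp_mul_apply, Matrix.smul_apply, PauliOp_mul_apply, chi,
    smul_eq_mul, ← Finset.prod_mul_distrib]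
  refine Finset.prod_congr rfl fun a _ => ?_
  rw [pauli1_comm (s a) (s' a), Matrix.smul_apply, smul_eq_mul]

lemma pauli1_conjTranspose (c : Fin 4) : (pauli1 c)ᴴ = pauli1 c := by
  fin_cases c <;>
    · ext a b
      fin_cases a <;> fin_cases b <;> simp [pauli1]

lemma PauliOp_conjTranspose (s : Fin n → Fin 4) :
    (PauliOp n s)ᴴ = PauliOp n s := by
  ext i j
  rw [Matrix.conjTranspose_apply]
  show star (Matrix.of _ j i) = Matrix.of _ i j
  simp only [PauliOp, Matrix.of_apply]
  rw [star_prod]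
  refine Finset.prod_congr rfl fun a _ => ?_
  have := congrFun (congrFun (pauli1_conjTranspose (s a)) (i a)) (j a)
  rwa [Matrix.conjTranspose_apply] at this

variable (v : (Fin n → Fin 2) → ℂ)

lemma psi_conjTranspose : (Matrix.vecMulVec v (star v))ᴴ = Matrix.vecMulVec v (star v) := by
  ext i j
  simp [Matrix.conjTranspose_apply, Matrix.vecMulVec_apply, mul_comm]

lemma trace_conj (M : Matrix (Fin n → Fin 2) (Fin n → Fin 2) ℂ) :
    (starRingEnd ℂ) (trace M) = trace Mᴴ := by
  rw [Matrix.trace_conjTranspose]; rfl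

lemma psi_mul_psi (hv : star v ⬝ᵥ v = 1) :
    Matrix.vecMulVec v (star v) * Matrix.vecMulVec v (star v)
      = Matrix.vecMulVec v (star v) := by
  ext i j
  rw [Matrix.mul_apply]
  simp only [Matrix.vecMulVec_apply, Pi.star_apply]
  calc ∑ k, v i * star (v k) * (v k * star (v j))
      = (∑ k, star (v k) * v k) * (v i * star (v j)) := by
        rw [Finset.sum_mul]; exact Finset.sum_congr rfl fun k _ => by ring
    _ = v i * star (v j) := by
        have : ∑ k, star (v k) * v k = 1 := hv
        rw [this, one_mul]
    -- hv : star v ⬝ᵥ v = ∑ k, star v k * v k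

lemma trace_psi : trace (Matrix.vecMulVec v (star v)) = star v ⬝ᵥ v := by
  simp [Matrix.trace, Matrix.diag, Matrix.vecMulVec_apply, dotProduct, mul_comm]

lemma psi_M_psi (M : Matrix (Fin n → Fin 2) (Fin n → Fin 2) ℂ) :
    Matrix.vecMulVec v (star v) * M * Matrix.vecMulVec v (star v)
      = trace (M * Matrix.vecMulVec v (star v)) • Matrix.vecMulVec v (star v) := by
  ext i j
  rw [Matrix.mul_apply, Matrix.smul_apply, smul_eq_mul]
  simp only [Matrix.mul_apply, Matrix.vecMulVec_apply, Pi.star_apply,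
    Matrix.trace, Matrix.diag, Finset.sum_mul, Finset.mul_sum]
  rw [Finset.sum_comm]
  refine Finset.sum_congr rfl fun k _ => ?_
  refine Finset.sum_congr rfl fun l _ => ?_
  ring

lemma chi1_symm (c c' : Fin 4) : chi1 c c' = chi1 c' c := by
  rw [chi1, chi1]
  by_cases h : pauli1 c * pauli1 c' = pauli1 c' * pauli1 c
  · rw [if_pos h, if_pos h.symm]
  · rw [if_neg h, if_neg (fun hh => h hh.symm)]

lemma chi_symm (s s' : Fin n → Fin 4) : chi n s s' = chi n s' s :=
  Finset.prod_congr rfl fun a _ => chi1_symm (s a) (s' a)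

lemma comm_iff_chi (s s' : Fin n → Fin 4) :
    PauliOp n s * PauliOp n s' = PauliOp n s' * PauliOp n s ↔ chi n s s' = 1 := by
  constructor
  · intro h
    rcases chi_cases s s' with hc | hc
    · exact hc
    · exfalso
      have h2 := PauliOp_commute s s'
      rw [hc, h, neg_one_smul] at h2
      have h3 : (2 : ℂ) • (PauliOp n s' * PauliOp n s) = 0 := by
        rw [two_smul]
        nth_rewrite 1 [h2]
        simp
      have h4 : PauliOp n s' * PauliOp n s = 0 := by
        have := smul_eq_zero.mp h3
        rcases this with h | h
        · norm_num at h
        · exact h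
      have h5 : (PauliOp n s' * PauliOp n s) * (PauliOp n s * PauliOp n s') = 1 := by
        calc (PauliOp n s' * PauliOp n s) * (PauliOp n s * PauliOp n s')
            = PauliOp n s' * (PauliOp n s * PauliOp n s) * PauliOp n s' := by
              simp only [mul_assoc]
          _ = PauliOp n s' * PauliOp n s' := by rw [PauliOp_mul_self]; simp [mul_assoc]
          _ = 1 := PauliOp_mul_self s'
      rw [h4, zero_mul] at h5
      have := congrArg trace h5
      rw [Matrix.trace_zero, Matrix.trace_one] at this
      exact absurd this.symm (Nat.cast_ne_zero.mpr Fintype.card_ne_zero)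
  · intro h
    have h2 := PauliOp_commute s s'
    rw [h, one_smul] at h2
    exact h2

lemma indicator_eq (s s' : Fin n → Fin 4) :
    (if PauliOp n s * PauliOp n s' = PauliOp n s' * PauliOp n s then (1:ℂ) else 0)
      = (1 + chi n s s') / 2 := by
  by_cases h : PauliOp n s * PauliOp n s' = PauliOp n s' * PauliOp n s
  · rw [if_pos h, (comm_iff_chi s s').mp h]; norm_num
  · rw [if_neg h]
    rcases chi_cases s s' with hc | hc
    · exact absurd ((comm_iff_chi s s').mpr hc) h
    · rw [hc]; norm_num

lemma conj_by_P (s s' : Fin n → Fin 4) :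
    PauliOp n s * PauliOp n s' * PauliOp n s = chi n s s' • PauliOp n s' := by
  rw [PauliOp_commute s s', smul_mul_assoc, mul_assoc, PauliOp_mul_self, mul_one]

lemma trace_cyc (X M Y : Matrix (Fin n → Fin 2) (Fin n → Fin 2) ℂ) :
    trace (X * M * Y) = trace (M * (Y * X)) := by
  rw [Matrix.trace_mul_cycle, ← Matrix.trace_mul_comm]

lemma conj_AB (s1 s2 : Fin n → Fin 4) :
    (starRingEnd ℂ) (trace (PauliOp n s1 * PauliOp n s2 * Matrix.vecMulVec v (star v)))
      = trace (PauliOp n s2 * PauliOp n s1 * Matrix.vecMulVec v (star v)) := by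
  rw [trace_conj, Matrix.conjTranspose_mul, Matrix.conjTranspose_mul,
    PauliOp_conjTranspose, PauliOp_conjTranspose, psi_conjTranspose]
  rw [Matrix.trace_mul_comm, mul_assoc]

lemma conj_T (t : Fin n → Fin 4) :
    (starRingEnd ℂ) (trace (PauliOp n t * Matrix.vecMulVec v (star v)))
      = trace (PauliOp n t * Matrix.vecMulVec v (star v)) := by
  rw [trace_conj, Matrix.conjTranspose_mul, PauliOp_conjTranspose, psi_conjTranspose]
  rw [Matrix.trace_mul_comm]

lemma trace_PpsiPpsi (t : Fin n → Fin 4) :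
    trace (PauliOp n t * Matrix.vecMulVec v (star v) * (PauliOp n t * Matrix.vecMulVec v (star v)))
      = trace (PauliOp n t * Matrix.vecMulVec v (star v)) ^ 2 := by
  have h : PauliOp n t * Matrix.vecMulVec v (star v) * (PauliOp n t * Matrix.vecMulVec v (star v))
      = PauliOp n t * (Matrix.vecMulVec v (star v) * PauliOp n t * Matrix.vecMulVec v (star v)) := by
    simp only [mul_assoc]
  rw [h, psi_M_psi v (PauliOp n t), Matrix.mul_smul, Matrix.trace_smul, smul_eq_mul, pow_two]

lemma sum1 (hv : star v ⬝ᵥ v = 1) (s'' : Fin n → Fin 4) :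
    ∑ s' : Fin n → Fin 4,
      trace (PauliOp n s'' * PauliOp n s' * Matrix.vecMulVec v (star v)) *
      trace (PauliOp n s' * PauliOp n s'' * Matrix.vecMulVec v (star v))
      = (2:ℂ)^n := by
  set ψ := Matrix.vecMulVec v (star v) with hψ
  have e1 : ∀ s' : Fin n → Fin 4, trace (PauliOp n s'' * PauliOp n s' * ψ)
      = trace (PauliOp n s' * (ψ * PauliOp n s'')) := fun s' => trace_cyc _ _ _
  have e2 : ∀ s' : Fin n → Fin 4, trace (PauliOp n s' * PauliOp n s'' * ψ)
      = trace (PauliOp n s' * (PauliOp n s'' * ψ)) := fun s' => by rw [mul_assoc]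
  simp only [e1, e2]
  rw [moment]
  have h3 : ψ * PauliOp n s'' * (PauliOp n s'' * ψ) = ψ * ψ := by
    calc ψ * PauliOp n s'' * (PauliOp n s'' * ψ)
        = ψ * (PauliOp n s'' * PauliOp n s'') * ψ := by simp only [mul_assoc]
      _ = ψ * ψ := by rw [PauliOp_mul_self, mul_one]
  rw [h3, psi_mul_psi v hv, trace_psi, hv, mul_one]

lemma sum2 (hv : star v ⬝ᵥ v = 1) (s s'' : Fin n → Fin 4) :
    ∑ s' : Fin n → Fin 4, chi n s s' *
      (trace (PauliOp n s'' * PauliOp n s' * Matrix.vecMulVec v (star v)) *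
       trace (PauliOp n s' * PauliOp n s'' * Matrix.vecMulVec v (star v)))
      = (2:ℂ)^n * (chi n s s'' *
          trace (PauliOp n s * Matrix.vecMulVec v (star v)) ^ 2) := by
  set ψ := Matrix.vecMulVec v (star v) with hψ
  have e1 : ∀ s' : Fin n → Fin 4, chi n s s' * trace (PauliOp n s'' * PauliOp n s' * ψ)
      = trace (PauliOp n s' * (PauliOp n s * ψ * (PauliOp n s'' * PauliOp n s))) := by
    intro s'
    have h0 : trace (PauliOp n s'' * (PauliOp n s * PauliOp n s' * PauliOp n s) * ψ)
        = chi n s s' * trace (PauliOp n s'' * PauliOp n s' * ψ) := by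
      rw [conj_by_P, Matrix.mul_smul, Matrix.smul_mul, Matrix.trace_smul, smul_eq_mul]
    rw [← h0]
    have h1 : PauliOp n s'' * (PauliOp n s * PauliOp n s' * PauliOp n s) * ψ
        = PauliOp n s'' * PauliOp n s * PauliOp n s' * (PauliOp n s * ψ) := by
      simp only [mul_assoc]
    rw [h1, trace_cyc]
  have e2 : ∀ s' : Fin n → Fin 4, trace (PauliOp n s' * PauliOp n s'' * ψ)
      = trace (PauliOp n s' * (PauliOp n s'' * ψ)) := fun s' => by rw [mul_assoc]
  have e3 : ∀ s' : Fin n → Fin 4, chi n s s' *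
      (trace (PauliOp n s'' * PauliOp n s' * ψ) * trace (PauliOp n s' * PauliOp n s'' * ψ))
      = trace (PauliOp n s' * (PauliOp n s * ψ * (PauliOp n s'' * PauliOp n s))) *
        trace (PauliOp n s' * (PauliOp n s'' * ψ)) := fun s' => by
    rw [← mul_assoc, e1 s', e2 s']
  simp only [e3]
  rw [moment]
  congr 1
  have h2 : PauliOp n s * ψ * (PauliOp n s'' * PauliOp n s) * (PauliOp n s'' * ψ)
      = PauliOp n s * ψ * (PauliOp n s'' * PauliOp n s * PauliOp n s'' * ψ) := by
    simp only [mul_assoc]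
  rw [h2, conj_by_P s'' s, chi_symm s'' s, Matrix.smul_mul, Matrix.mul_smul,
    Matrix.trace_smul, smul_eq_mul]
  congr 1
  have h4 : PauliOp n s * ψ * (PauliOp n s * ψ)
      = PauliOp n s * ψ * (PauliOp n s * ψ) := rfl
  exact trace_PpsiPpsi v s

lemma sumT2 (hv : star v ⬝ᵥ v = 1) :
    ∑ t : Fin n → Fin 4, trace (PauliOp n t * Matrix.vecMulVec v (star v)) ^ 2
      = (2:ℂ)^n := by
  simp only [pow_two]
  rw [moment, psi_mul_psi v hv, trace_psi, hv, mul_one]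

lemma sumChiT2 (hv : star v ⬝ᵥ v = 1) (s : Fin n → Fin 4) :
    ∑ t : Fin n → Fin 4, chi n s t *
        trace (PauliOp n t * Matrix.vecMulVec v (star v)) ^ 2
      = (2:ℂ)^n * trace (PauliOp n s * Matrix.vecMulVec v (star v)) ^ 2 := by
  set ψ := Matrix.vecMulVec v (star v) with hψ
  have e1 : ∀ t : Fin n → Fin 4, chi n s t * trace (PauliOp n t * ψ)
      = trace (PauliOp n t * (PauliOp n s * ψ * PauliOp n s)) := by
    intro t
    have h0 : trace (PauliOp n s * PauliOp n t * PauliOp n s * ψ)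
        = chi n s t * trace (PauliOp n t * ψ) := by
      rw [conj_by_P, Matrix.smul_mul, Matrix.trace_smul, smul_eq_mul]
    rw [← h0]
    have h1 : PauliOp n s * PauliOp n t * PauliOp n s * ψ
        = PauliOp n s * PauliOp n t * (PauliOp n s * ψ) := by
      simp only [mul_assoc]
    rw [h1, trace_cyc]
  have e2 : ∀ t : Fin n → Fin 4, chi n s t * trace (PauliOp n t * ψ) ^ 2
      = trace (PauliOp n t * (PauliOp n s * ψ * PauliOp n s)) * trace (PauliOp n t * ψ) := by
    intro t
    rw [pow_two, ← mul_assoc, e1]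
  simp only [e2]
  rw [moment]
  congr 1
  have h2 : PauliOp n s * ψ * PauliOp n s * ψ
      = PauliOp n s * ψ * (PauliOp n s * ψ) := by simp only [mul_assoc]
  rw [h2, trace_PpsiPpsi v s]


/-- For a pure state `ψ = v v†` and `P ∈ 𝒫_n`, the probability under the
Bell-difference (convolved Pauli) distribution that a sampled Pauli commutes with
`P` is `(1 + tr(Pψ)⁴)/2`. -/
theorem pauli_conv_commuting_mass (n : ℕ) (hn : 1 ≤ n)
    (v : (Fin n → Fin 2) → ℂ) (hv : star v ⬝ᵥ v = 1) (s : Fin n → Fin 4) :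
    ∑ s' ∈ Finset.univ.filter (fun s' : Fin n → Fin 4 =>
        PauliOp n s * PauliOp n s' = PauliOp n s' * PauliOp n s),
      pConv n (Matrix.vecMulVec v (star v)) s' =
    (1 + ((Matrix.trace (PauliOp n s * Matrix.vecMulVec v (star v))).re) ^ 4) / 2 := by
  rw [← Complex.ofReal_inj]
  set ψ := Matrix.vecMulVec v (star v) with hψ
  have hd : ((2:ℂ)^n) ≠ 0 := pow_ne_zero n two_ne_zero
  have hre : ∀ t : Fin n → Fin 4,
      (((trace (PauliOp n t * ψ)).re : ℝ) : ℂ) = trace (PauliOp n t * ψ) := fun t =>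
    Complex.conj_eq_iff_re.mp (conj_T v t)
  -- abbreviation for inner double product
  set T : (Fin n → Fin 4) → ℂ := fun t => trace (PauliOp n t * ψ) with hT
  set g : (Fin n → Fin 4) → ℂ := fun s' => ∑ s'' : Fin n → Fin 4,
      T s'' ^ 2 * (trace (PauliOp n s'' * PauliOp n s' * ψ) *
        trace (PauliOp n s' * PauliOp n s'' * ψ)) with hg
  have hPconv : ∀ s' : Fin n → Fin 4,
      ((pConv n ψ s' : ℝ) : ℂ) = g s' / ((2:ℂ)^n * (2:ℂ)^n) := by
    intro s'
    rw [pConv, hg]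
    push_cast
    rw [Finset.sum_div]
    refine Finset.sum_congr rfl fun s'' _ => ?_
    rw [pDist]
    push_cast
    rw [hre]
    have hnq : ((Complex.normSq (trace (PauliOp n s'' * PauliOp n s' * ψ)) : ℝ) : ℂ)
        = trace (PauliOp n s'' * PauliOp n s' * ψ) *
          trace (PauliOp n s' * PauliOp n s'' * ψ) := by
      rw [Complex.normSq_eq_conj_mul_self, conj_AB, mul_comm]
    rw [hnq]
    ring
  rw [Complex.ofReal_sum]
  rw [Finset.sum_congr rfl (fun s' _ => hPconv s')]
  rw [Finset.sum_filter]
  have hind : ∀ s' : Fin n → Fin 4,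
      (if PauliOp n s * PauliOp n s' = PauliOp n s' * PauliOp n s
        then g s' / ((2:ℂ)^n * (2:ℂ)^n) else 0)
      = (1 + chi n s s') / 2 * (g s' / ((2:ℂ)^n * (2:ℂ)^n)) := by
    intro s'
    rw [← indicator_eq s s']
    split <;> simp
  simp only [hind]
  have hg1 : ∑ s' : Fin n → Fin 4, g s' = (2:ℂ)^n * (2:ℂ)^n := by
    rw [hg]
    rw [Finset.sum_comm]
    have : ∀ s'' : Fin n → Fin 4,
        (∑ s' : Fin n → Fin 4, T s'' ^ 2 * (trace (PauliOp n s'' * PauliOp n s' * ψ) *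
          trace (PauliOp n s' * PauliOp n s'' * ψ)))
        = T s'' ^ 2 * (2:ℂ)^n := fun s'' => by
      rw [← Finset.mul_sum, sum1 v hv s'']
    rw [Finset.sum_congr rfl fun s'' _ => this s'']
    rw [← Finset.sum_mul, hT]
    rw [sumT2 v hv]
  have hg2 : ∑ s' : Fin n → Fin 4, chi n s s' * g s'
      = (2:ℂ)^n * (2:ℂ)^n * T s ^ 4 := by
    rw [hg]
    simp only [Finset.mul_sum]
    rw [Finset.sum_comm]
    have h1 : ∀ s'' : Fin n → Fin 4,
        (∑ s' : Fin n → Fin 4, chi n s s' * (T s'' ^ 2 *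
          (trace (PauliOp n s'' * PauliOp n s' * ψ) *
           trace (PauliOp n s' * PauliOp n s'' * ψ))))
        = T s'' ^ 2 * ((2:ℂ)^n * (chi n s s'' * T s ^ 2)) := by
      intro s''
      have hr : ∀ s' : Fin n → Fin 4, chi n s s' * (T s'' ^ 2 *
          (trace (PauliOp n s'' * PauliOp n s' * ψ) *
           trace (PauliOp n s' * PauliOp n s'' * ψ)))
          = T s'' ^ 2 * (chi n s s' *
          (trace (PauliOp n s'' * PauliOp n s' * ψ) *
           trace (PauliOp n s' * PauliOp n s'' * ψ))) := fun s' => by ring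
      rw [Finset.sum_congr rfl fun s' _ => hr s', ← Finset.mul_sum, sum2 v hv s s'']
    rw [Finset.sum_congr rfl fun s'' _ => h1 s'']
    have h2 : ∀ s'' : Fin n → Fin 4,
        T s'' ^ 2 * ((2:ℂ)^n * (chi n s s'' * T s ^ 2))
        = ((2:ℂ)^n * T s ^ 2) * (chi n s s'' * T s'' ^ 2) := fun s'' => by ring
    rw [Finset.sum_congr rfl fun s'' _ => h2 s'', ← Finset.mul_sum, hT]
    rw [sumChiT2 v hv s]
    ring
  calc ∑ s' : Fin n → Fin 4, (1 + chi n s s') / 2 * (g s' / ((2:ℂ)^n * (2:ℂ)^n))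
      = ∑ s' : Fin n → Fin 4,
          (g s' + chi n s s' * g s') / (2 * ((2:ℂ)^n * (2:ℂ)^n)) := by
        refine Finset.sum_congr rfl fun s' _ => ?_
        ring
    _ = ((∑ s' : Fin n → Fin 4, g s') + ∑ s' : Fin n → Fin 4, chi n s s' * g s')
          / (2 * ((2:ℂ)^n * (2:ℂ)^n)) := by
        rw [← Finset.sum_div, Finset.sum_add_distrib]
    _ = ((2:ℂ)^n * (2:ℂ)^n + (2:ℂ)^n * (2:ℂ)^n * T s ^ 4)
          / (2 * ((2:ℂ)^n * (2:ℂ)^n)) := by rw [hg1, hg2]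
    _ = (1 + T s ^ 4) / 2 := by
        field_simp
    _ = ((1 + ((trace (PauliOp n s * ψ)).re : ℝ) ^ 4) / 2 : ℝ) := by
        push_cast
        rw [hre, hT]
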